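/- Fix t ≥ 1, ρ ∈ [0,1], and a symmetric positive definite d×d real matrix Σ0. With A_t^ρ = √(ᾱ_t) Σ0 ( ∏_{i=0}^{t−1} ( I + (1/2) ρ (β_{i+1}/α_{i+1}) Σ_i^{-1} ) ) Σ_t^{-1} and B_t^ρ = (1/2)(2−ρ) ( ∑_{i=2}^{t} ᾱ_{i−1} β_i Σ0 ( ∏_{j=0}^{i−2} ( I + (1/2) ρ (β_{j+1}/α_{j+1}) Σ_j^{-1} ) ) Σ_{i−1}^{-1} Σ_i^{-1} + β_1 Σ_1^{-1} ), one has the exact identity √(ᾱ_t) A_t^ρ + B_t^ρ = I. (Consequently, if Z_t has mean √(ᾱ_t) μ0, then the reconstruction A_t^ρ Z_t + B_t^ρ μ0 has mean μ0 for every ρ ∈ [0,1].) -/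

import Mathlib

open Matrix

/-- Auxiliary: a positive combination `a • M + b • 1` with `M` positive definite,
`a > 0`, `b ≥ 0` is positive definite. -/
lemma posDef_smul_add_smul_one {d : ℕ} {M : Matrix (Fin d) (Fin d) ℝ} (hM : M.PosDef)
    {a b : ℝ} (ha : 0 < a) (hb : 0 ≤ b) :
    (a • M + b • (1 : Matrix (Fin d) (Fin d) ℝ)).PosDef := by
  refine Matrix.PosDef.add_posSemidef ⟨?_, ?_⟩ ⟨?_, ?_⟩
  · show (a • M)ᴴ = a • M
    rw [conjTranspose_smul, hM.1.eq, star_trivial]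
  · intro x hx
    exact (hM.smul ha).2 hx
  · show (b • (1 : Matrix (Fin d) (Fin d) ℝ))ᴴ = b • 1
    rw [conjTranspose_smul, conjTranspose_one, star_trivial]
  · intro x
    exact (Matrix.PosSemidef.one.smul hb).2 x

/-- The exact identity `√(ᾱ_t) A_t^ρ + B_t^ρ = I` for the coefficient matrices of the
score-scaled PF-ODE; consequently the reconstruction `A_t^ρ Z_t + B_t^ρ μ0` has mean `μ0`
whenever `Z_t` has mean `√(ᾱ_t) μ0`. -/
theorem stmt_2 (d t : ℕ) (hd : 1 ≤ d) (ht : 1 ≤ t)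
    (ρ : ℝ) (hρ : ρ ∈ Set.Icc (0:ℝ) 1)
    (β : ℕ → ℝ) (hβ : ∀ k, 1 ≤ k → k ≤ t → β k ∈ Set.Ioo (0:ℝ) 1)
    (al : ℕ → ℝ) (hal : ∀ k, al k = 1 - β k)
    (alb : ℕ → ℝ) (halb : ∀ k, alb k = ∏ i ∈ Finset.Icc 1 k, al i)
    (S0 : Matrix (Fin d) (Fin d) ℝ) (hS0 : S0.PosDef)
    (S : ℕ → Matrix (Fin d) (Fin d) ℝ)
    (hS : ∀ k, S k = alb k • S0 + (1 - alb k) • (1 : Matrix (Fin d) (Fin d) ℝ))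
    (A B : Matrix (Fin d) (Fin d) ℝ)
    (hA : A = Real.sqrt (alb t) •
      (S0 *
        ((List.range t).map (fun i =>
          (1 : Matrix (Fin d) (Fin d) ℝ) +
            ((1/2) * ρ * (β (i+1) / al (i+1))) • (S i)⁻¹)).prod *
        (S t)⁻¹))
    (hB : B = ((1/2) * (2 - ρ)) •
      ((∑ i ∈ Finset.Icc 2 t, (alb (i-1) * β i) •
          (S0 *
            ((List.range (i-1)).map (fun j =>
              (1 : Matrix (Fin d) (Fin d) ℝ) +
                ((1/2) * ρ * (β (j+1) / al (j+1))) • (S j)⁻¹)).prod *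
            (S (i-1))⁻¹ * (S i)⁻¹))
        + β 1 • (S 1)⁻¹)) :
    Real.sqrt (alb t) • A + B = (1 : Matrix (Fin d) (Fin d) ℝ) ∧
    ∀ μ0 : Fin d → ℝ, A.mulVec (Real.sqrt (alb t) • μ0) + B.mulVec μ0 = μ0 := by
  -- scalar positivity facts
  have halpos : ∀ i, 1 ≤ i → i ≤ t → 0 < al i := by
    intro i h1 h2
    rw [hal]
    have := (hβ i h1 h2).2
    linarith
  have halle : ∀ i, 1 ≤ i → i ≤ t → al i ≤ 1 := by
    intro i h1 h2
    rw [hal]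
    have := (hβ i h1 h2).1
    linarith
  have halbpos : ∀ k, k ≤ t → 0 < alb k := by
    intro k hk
    rw [halb]
    exact Finset.prod_pos fun i hi =>
      halpos i (Finset.mem_Icc.mp hi).1 (le_trans (Finset.mem_Icc.mp hi).2 hk)
  have halble : ∀ k, k ≤ t → alb k ≤ 1 := by
    intro k hk
    rw [halb]
    refine Finset.prod_le_one (fun i hi => ?_) (fun i hi => ?_)
    · exact (halpos i (Finset.mem_Icc.mp hi).1 (le_trans (Finset.mem_Icc.mp hi).2 hk)).le
    · exact halle i (Finset.mem_Icc.mp hi).1 (le_trans (Finset.mem_Icc.mp hi).2 hk)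
  -- positive definiteness and invertibility of the S k
  have hSpd : ∀ k, k ≤ t → (S k).PosDef := by
    intro k hk
    rw [hS]
    exact posDef_smul_add_smul_one hS0 (halbpos k hk) (by linarith [halble k hk])
  have hmulinv : ∀ k, k ≤ t → S k * (S k)⁻¹ = 1 := fun k hk =>
    Matrix.mul_nonsing_inv _ (hSpd k hk).det_pos.ne'.isUnit
  have hinvmul : ∀ k, k ≤ t → (S k)⁻¹ * S k = 1 := fun k hk =>
    Matrix.nonsing_inv_mul _ (hSpd k hk).det_pos.ne'.isUnit
  -- basic identities
  have halb0 : alb 0 = 1 := by rw [halb]; simp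
  have hS0eq : S 0 = S0 := by rw [hS, halb0]; simp
  have halbsucc : ∀ k, alb (k+1) = alb k * al (k+1) := by
    intro k
    rw [halb, halb, Finset.prod_Icc_succ_top (Nat.le_add_left 1 k)]
  have hSsucc : ∀ k, S (k+1) = al (k+1) • S k + β (k+1) • 1 := by
    intro k
    rw [hS, hS, halbsucc k]
    simp only [hal]
    match_scalars <;> ring
  set f : ℕ → Matrix (Fin d) (Fin d) ℝ := fun i =>
    (1 : Matrix (Fin d) (Fin d) ℝ) +
      ((1/2) * ρ * (β (i+1) / al (i+1))) • (S i)⁻¹ with hf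
  have hPsucc : ∀ k, ((List.range (k+1)).map f).prod = ((List.range k).map f).prod * f k := by
    intro k
    rw [List.range_succ, List.map_append, List.prod_append, List.map_singleton,
      List.prod_singleton]
  -- the main inductive identity
  have key : ∀ k, 1 ≤ k → k ≤ t →
      alb k • (S0 * ((List.range k).map f).prod * (S k)⁻¹) +
        ((1/2) * (2 - ρ)) •
          ((∑ i ∈ Finset.Icc 2 k, (alb (i-1) * β i) •
              (S0 * ((List.range (i-1)).map f).prod * (S (i-1))⁻¹ * (S i)⁻¹))
            + β 1 • (S 1)⁻¹) = (1 : Matrix (Fin d) (Fin d) ℝ) := by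
    intro k hk1
    induction k, hk1 using Nat.le_induction with
    | base =>
      intro htle
      have hIcc : Finset.Icc 2 1 = (∅ : Finset ℕ) := by decide
      rw [hIcc, Finset.sum_empty, zero_add]
      have hP1 : ((List.range 1).map f).prod = f 0 := by
        rw [hPsucc 0]; simp
      have hal1ne : al 1 ≠ 0 := (halpos 1 le_rfl htle).ne'
      have h1 : S0 * ((List.range 1).map f).prod
          = S0 + ((1/2) * ρ * (β 1 / al 1)) • (1 : Matrix (Fin d) (Fin d) ℝ) := by
        rw [hP1,
          show f 0 = 1 + ((1/2) * ρ * (β 1 / al 1)) • (S 0)⁻¹ from rfl,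
          mul_add, mul_one, mul_smul_comm, ← hS0eq, hmulinv 0 (Nat.zero_le t)]
      have halb1 : alb 1 = al 1 := by rw [halb]; simp
      have hS1 : S 1 = al 1 • S0 + β 1 • 1 := by
        rw [hSsucc 0, hS0eq]
      have key1 : alb 1 • (S0 + ((1/2) * ρ * (β 1 / al 1)) • (1 : Matrix (Fin d) (Fin d) ℝ))
          + (((1/2) * (2 - ρ)) * β 1) • (1 : Matrix (Fin d) (Fin d) ℝ) = S 1 := by
        rw [hS1, halb1]
        match_scalars
        · ring
        · field_simp
          ring
      calc alb 1 • (S0 * ((List.range 1).map f).prod * (S 1)⁻¹)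
            + ((1/2) * (2 - ρ)) • (β 1 • (S 1)⁻¹)
          = (alb 1 • (S0 + ((1/2) * ρ * (β 1 / al 1)) • (1 : Matrix (Fin d) (Fin d) ℝ))
              + (((1/2) * (2 - ρ)) * β 1) • (1 : Matrix (Fin d) (Fin d) ℝ)) * (S 1)⁻¹ := by
            rw [h1]
            simp only [add_mul, smul_mul_assoc, smul_add, smul_smul, one_mul]
        _ = S 1 * (S 1)⁻¹ := by rw [key1]
        _ = 1 := hmulinv 1 htle
    | succ k hk ih =>
      intro htle
      have hkt : k ≤ t := by omega
      have ih' := ih hkt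
      have hal1ne : al (k+1) ≠ 0 := (halpos (k+1) (by omega) htle).ne'
      -- abbreviations
      set X : Matrix (Fin d) (Fin d) ℝ := S0 * ((List.range k).map f).prod with hX
      set Y : Matrix (Fin d) (Fin d) ℝ := X * (S k)⁻¹ with hY
      have e2 : Y * S k = X := by
        rw [hY, mul_assoc, hinvmul k hkt, mul_one]
      have e3 : Y * S (k+1) = al (k+1) • X + β (k+1) • Y := by
        rw [hSsucc k, mul_add, mul_smul_comm, mul_smul_comm, e2, mul_one]
      have e1 : S0 * ((List.range (k+1)).map f).prod
          = X + ((1/2) * ρ * (β (k+1) / al (k+1))) • Y := by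
        rw [hPsucc k, ← mul_assoc, ← hX,
          show f k = 1 + ((1/2) * ρ * (β (k+1) / al (k+1))) • (S k)⁻¹ from rfl,
          mul_add, mul_one, mul_smul_comm, ← hY]
      have inner : alb (k+1) • (X + ((1/2) * ρ * (β (k+1) / al (k+1))) • Y)
          + (((1/2) * (2 - ρ)) * (alb k * β (k+1))) • Y
          = alb k • (Y * S (k+1)) := by
        rw [e3, halbsucc k]
        match_scalars
        · ring
        · field_simp
          ring
      have hstep : alb (k+1) • (S0 * ((List.range (k+1)).map f).prod * (S (k+1))⁻¹)
          + (((1/2) * (2 - ρ)) * (alb k * β (k+1))) • (Y * (S (k+1))⁻¹)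
          = alb k • Y := by
        calc alb (k+1) • (S0 * ((List.range (k+1)).map f).prod * (S (k+1))⁻¹)
              + (((1/2) * (2 - ρ)) * (alb k * β (k+1))) • (Y * (S (k+1))⁻¹)
            = (alb (k+1) • (X + ((1/2) * ρ * (β (k+1) / al (k+1))) • Y)
                + (((1/2) * (2 - ρ)) * (alb k * β (k+1))) • Y) * (S (k+1))⁻¹ := by
              rw [e1]
              simp only [add_mul, smul_mul_assoc, smul_add, smul_smul]
          _ = (alb k • (Y * S (k+1))) * (S (k+1))⁻¹ := by rw [inner]
          _ = alb k • Y := by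
              rw [smul_mul_assoc, mul_assoc, hmulinv (k+1) htle, mul_one]
      rw [Finset.sum_Icc_succ_top (by omega : 2 ≤ k + 1)]
      simp only [Nat.add_sub_cancel]
      rw [← hX, ← hY]
      calc alb (k+1) • (S0 * ((List.range (k+1)).map f).prod * (S (k+1))⁻¹)
            + ((1/2) * (2 - ρ)) •
              (((∑ i ∈ Finset.Icc 2 k, (alb (i-1) * β i) •
                  (S0 * ((List.range (i-1)).map f).prod * (S (i-1))⁻¹ * (S i)⁻¹))
                + (alb k * β (k+1)) • (Y * (S (k+1))⁻¹))
                + β 1 • (S 1)⁻¹)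
          = (alb (k+1) • (S0 * ((List.range (k+1)).map f).prod * (S (k+1))⁻¹)
              + (((1/2) * (2 - ρ)) * (alb k * β (k+1))) • (Y * (S (k+1))⁻¹))
            + ((1/2) * (2 - ρ)) •
              ((∑ i ∈ Finset.Icc 2 k, (alb (i-1) * β i) •
                  (S0 * ((List.range (i-1)).map f).prod * (S (i-1))⁻¹ * (S i)⁻¹))
                + β 1 • (S 1)⁻¹) := by
            simp only [smul_add, smul_smul]
            abel
        _ = alb k • Y
            + ((1/2) * (2 - ρ)) •
              ((∑ i ∈ Finset.Icc 2 k, (alb (i-1) * β i) •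
                  (S0 * ((List.range (i-1)).map f).prod * (S (i-1))⁻¹ * (S i)⁻¹))
                + β 1 • (S 1)⁻¹) := by rw [hstep]
        _ = 1 := ih'
  -- assemble
  have main : Real.sqrt (alb t) • A + B = (1 : Matrix (Fin d) (Fin d) ℝ) := by
    rw [hA, hB, smul_smul, Real.mul_self_sqrt (halbpos t le_rfl).le]
    exact key t ht le_rfl
  refine ⟨main, fun μ0 => ?_⟩
  have h2 : (Real.sqrt (alb t) • A + B).mulVec μ0 = μ0 := by
    rw [main, one_mulVec]
  rw [add_mulVec, smul_mulVec] at h2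
  rw [mulVec_smul]
  exact h2
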